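/- arXiv:1806.05270 — 2 statements merged into one kernel-verified Lean document; each statement's English description precedes it below -/
import Mathlib

section
/- Let T be a closed, densely defined linear operator in ℱ²_d such that (i) for each j, R_j Dom(T) ⊆ Dom(T) and T R_j F = R_j T F for all F ∈ Dom(T), and (ii) whenever F ∈ Dom(T) has ⟨F, ξ_∅⟩ = 0, then R_j*F ∈ Dom(T) for each j. Let G(T) = {F ⊕ TF : F ∈ Dom(T)} be its graph and let 𝒲 = G(T) ⊖ closure(span ∪_j (R_j ⊕ R_j)G(T)) be the wandering subspace of the restriction of R ⊕ R to G(T). Then 𝒲 is one-dimensional; it is spanned by the nonzero vector Q*ξ_∅, where Q : G(T) → ℱ²_d is the contraction Q(F ⊕ TF) = F. -/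
noncomputable section
open scoped ENNReal

namespace Smirnov

/-- Words in the letters `1,…,d`: the free monoid `𝔽⁺_d`. -/
abbrev Word (d : ℕ) := List (Fin d)

/-- The full Fock space `ℱ²_d = ℓ²(𝔽⁺_d)`. -/
abbrev Fock (d : ℕ) : Type := lp (fun _ : Word d => ℂ) 2

/-- The Cauchy product of formal free power series:
`(H·F)_α = ∑_{βγ=α} H_β F_γ`. -/
def cauchy {d : ℕ} (H F : Word d → ℂ) : Word d → ℂ :=
  fun α => ∑ i ∈ Finset.range (α.length + 1), H (List.take i α) * F (List.drop i α)

/-- The standard basis formal power series `ξ_w`; `eWord []` is `ξ_∅`. -/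
def eWord {d : ℕ} (w : Word d) : Word d → ℂ := fun α => if α = w then 1 else 0

/-- `H` is a bounded left multiplier of the Fock space: `H·F ∈ ℱ²_d` for every
`F ∈ ℱ²_d` and `F ↦ H·F` is bounded. -/
def IsBLM {d : ℕ} (H : Word d → ℂ) : Prop :=
  (∀ F : Fock d, Memℓp (cauchy H (F : Word d → ℂ)) 2) ∧
  (∃ C : ℝ, ∀ F G : Fock d, (G : Word d → ℂ) = cauchy H (F : Word d → ℂ) → ‖G‖ ≤ C * ‖F‖)

/-- `A` is left outer: `A·ℱ²_d` is dense in `ℱ²_d`. -/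
def IsLeftOuter {d : ℕ} (A : Word d → ℂ) : Prop :=
  Dense {G : Fock d | ∃ F : Fock d, (G : Word d → ℂ) = cauchy A (F : Word d → ℂ)}

/-- The domain `D_H = {F ∈ ℱ²_d : H·F ∈ ℱ²_d}` of left multiplication by `H`. -/
def domH {d : ℕ} (H : Word d → ℂ) : Set (Fock d) :=
  {F : Fock d | Memℓp (cauchy H (F : Word d → ℂ)) 2}

/-- The right creation operator `R_j` at the level of formal power series:
`R_j ξ_α = ξ_{αj}`. -/
def rshift {d : ℕ} (j : Fin d) (F : Word d → ℂ) : Word d → ℂ :=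
  fun β => if β.getLast? = some j then F β.dropLast else 0

/-- The backward shift `R_j*` at the level of formal power series. -/
def rshiftAdj {d : ℕ} (j : Fin d) (F : Word d → ℂ) : Word d → ℂ :=
  fun γ => F (γ ++ [j])

section Aux

variable {d : ℕ}

lemma concat_injective (j : Fin d) : Function.Injective (fun γ : Word d => γ ++ [j]) := by
  intro a b h; simpa using h

lemma rshift_concat (j : Fin d) (F : Word d → ℂ) (γ : Word d) :
    rshift j F (γ ++ [j]) = F γ := by
  simp [rshift]

lemma rshift_nil (j : Fin d) (F : Word d → ℂ) : rshift j F ([] : Word d) = 0 := by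
  simp [rshift]

lemma memℓp_rshiftAdj (j : Fin d) (F : Fock d) : Memℓp (rshiftAdj j (F : Word d → ℂ)) 2 := by
  apply memℓp_gen
  have hF : Summable fun γ : Word d => ‖(F : Word d → ℂ) γ‖ ^ (2 : ℝ≥0∞).toReal :=
    (lp.memℓp F).summable (by norm_num)
  exact hF.comp_injective (concat_injective j)

lemma memℓp_rshift (j : Fin d) (F : Fock d) : Memℓp (rshift j (F : Word d → ℂ)) 2 := by
  apply memℓp_gen
  have hF : Summable fun γ : Word d => ‖(F : Word d → ℂ) γ‖ ^ (2 : ℝ≥0∞).toReal :=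
    (lp.memℓp F).summable (by norm_num)
  refine (Function.Injective.summable_iff (concat_injective j) ?_).mp ?_
  · intro β hβ
    have hz : rshift j (F : Word d → ℂ) β = 0 := by
      rcases List.eq_nil_or_concat' β with rfl | ⟨γ, k, rfl⟩
      · exact rshift_nil j _
      · rcases eq_or_ne k j with rfl | hk
        · exact absurd ⟨γ, rfl⟩ hβ
        · simp [rshift, hk]
    rw [hz]
    simp [Real.zero_rpow]
  · convert hF using 1
    funext γ
    simp [Function.comp, rshift_concat]

lemma sum_rshift_rshiftAdj (F : Word d → ℂ) (hF : F ([] : Word d) = 0) (α : Word d) :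
    ∑ j : Fin d, rshift j (rshiftAdj j F) α = F α := by
  rcases List.eq_nil_or_concat' α with rfl | ⟨β, k, rfl⟩
  · simp [rshift_nil, hF]
  · rw [Finset.sum_eq_single k]
    · simp [rshift, rshiftAdj]
    · intro j _ hj
      simp [rshift, (Ne.symm hj)]
    · simp

/-- Evaluation at a word, as a continuous linear map. -/
def evalCLM (α : Word d) : Fock d →L[ℂ] ℂ :=
  LinearMap.mkContinuous
    { toFun := fun F => (F : Word d → ℂ) α
      map_add' := fun F G => by simp [lp.coeFn_add]
      map_smul' := fun c F => by simp [lp.coeFn_smul] }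
    1 (fun F => by
      show ‖(F : Word d → ℂ) α‖ ≤ 1 * ‖F‖
      simpa using lp.norm_apply_le_norm (by norm_num : (2 : ℝ≥0∞) ≠ 0) F α)

@[simp] lemma evalCLM_apply (α : Word d) (F : Fock d) :
    evalCLM α F = (F : Word d → ℂ) α := rfl

lemma coeFn_finset_sum {ι : Type*} (s : Finset ι) (f : ι → Fock d) :
    ((∑ i ∈ s, f i : Fock d) : Word d → ℂ) = ∑ i ∈ s, ((f i : Fock d) : Word d → ℂ) := by
  classical
  induction s using Finset.cons_induction with
  | empty => simp [lp.coeFn_zero]; rfl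
  | cons a s ha ih => rw [Finset.sum_cons, Finset.sum_cons, lp.coeFn_add, ih]

lemma inner_self_pair_eq_zero {x y : Fock d}
    (h : (inner ℂ x x + inner ℂ y y : ℂ) = 0) : x = 0 ∧ y = 0 := by
  have hx : (inner ℂ x x : ℂ) = (‖x‖ : ℂ) ^ 2 := inner_self_eq_norm_sq_to_K x
  have hy : (inner ℂ y y : ℂ) = (‖y‖ : ℂ) ^ 2 := inner_self_eq_norm_sq_to_K y
  rw [hx, hy] at h
  have h' : ((‖x‖ ^ 2 + ‖y‖ ^ 2 : ℝ) : ℂ) = 0 := by push_cast; linear_combination h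
  have h'' : ‖x‖ ^ 2 + ‖y‖ ^ 2 = 0 := by exact_mod_cast h'
  have hx0 : ‖x‖ = 0 := by nlinarith [sq_nonneg ‖x‖, sq_nonneg ‖y‖]
  have hy0 : ‖y‖ = 0 := by nlinarith [sq_nonneg ‖x‖, sq_nonneg ‖y‖]
  exact ⟨norm_eq_zero.mp hx0, norm_eq_zero.mp hy0⟩

/-- The Riesz vector representing `p ↦ (p.1)_∅` on a closed submodule of
`ℱ²_d ⊕ ℱ²_d`. -/
lemma exists_w (G : Submodule ℂ (Fock d × Fock d))
    (hclosed : IsClosed (G : Set (Fock d × Fock d))) :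
    ∃ w : Fock d × Fock d, w ∈ G ∧
      ∀ p ∈ G, (inner ℂ w.1 p.1 + inner ℂ w.2 p.2 : ℂ) = (p.1 : Word d → ℂ) ([] : Word d) := by
  classical
  let e : WithLp 2 (Fock d × Fock d) ≃L[ℂ] Fock d × Fock d :=
    WithLp.prodContinuousLinearEquiv 2 ℂ (Fock d) (Fock d)
  let G₂ : Submodule ℂ (WithLp 2 (Fock d × Fock d)) :=
    G.comap (e.toLinearEquiv : WithLp 2 (Fock d × Fock d) →ₗ[ℂ] Fock d × Fock d)
  have hG₂closed : IsClosed (G₂ : Set (WithLp 2 (Fock d × Fock d))) :=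
    hclosed.preimage e.continuous
  haveI : CompleteSpace G₂ := hG₂closed.completeSpace_coe
  let f : G₂ →L[ℂ] ℂ :=
    ((evalCLM ([] : Word d)).comp
      ((ContinuousLinearMap.fst ℂ (Fock d) (Fock d)).comp
        ((e : WithLp 2 (Fock d × Fock d) →L[ℂ] Fock d × Fock d).comp G₂.subtypeL)))
  let w₂ : G₂ := (InnerProductSpace.toDual ℂ G₂).symm f
  have hw₂ : ∀ p : G₂, (inner ℂ w₂ p : ℂ) = f p := fun p =>
    InnerProductSpace.toDual_symm_apply
  refine ⟨e (w₂ : WithLp 2 (Fock d × Fock d)), w₂.2, ?_⟩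
  intro p hp
  have hp₂ : (e.symm p) ∈ G₂ := by
    simp only [G₂, Submodule.mem_comap]
    simpa using hp
  have h := hw₂ ⟨e.symm p, hp₂⟩
  rw [Submodule.coe_inner, WithLp.prod_inner_apply] at h
  have h1 : ((WithLp.ofLp (w₂ : WithLp 2 (Fock d × Fock d))).fst) = (e (w₂ : WithLp 2 (Fock d × Fock d))).1 := rfl
  have h2 : ((WithLp.ofLp (w₂ : WithLp 2 (Fock d × Fock d))).snd) = (e (w₂ : WithLp 2 (Fock d × Fock d))).2 := rfl
  have h3 : (WithLp.ofLp ((⟨e.symm p, hp₂⟩ : G₂) : WithLp 2 (Fock d × Fock d))).fst = p.1 := rfl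
  have h4 : (WithLp.ofLp ((⟨e.symm p, hp₂⟩ : G₂) : WithLp 2 (Fock d × Fock d))).snd = p.2 := rfl
  have h5 : f ⟨e.symm p, hp₂⟩ = (p.1 : Word d → ℂ) ([] : Word d) := by
    show evalCLM ([] : Word d) ((e (e.symm p)).1) = _
    rw [e.apply_symm_apply]
    simp
  rw [h1, h2, h3, h4, h5] at h
  exact h

end Aux

/-- Let `T` be a closed, densely defined operator in `ℱ²_d`,
encoded by its graph `G`, a closed submodule of `ℱ²_d × ℱ²_d` which is the graph
of an operator (`(0,y) ∈ G → y = 0`) with dense domain (the set of first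
components).  Assume `G` is invariant under `R_j ⊕ R_j` (i.e. `T` commutes with
the right creation operators) and `T` is local (if `p ∈ G` and the coefficient
of `p.1` at the empty word vanishes, then `R_j* p.1` is again in the domain).
Then the wandering subspace `𝒲 = G ⊖ span ∪_j (R_j ⊕ R_j)G` is one-dimensional:
it is spanned by the nonzero vector `Q*ξ_∅`, where `Q(F ⊕ TF) = F`, i.e. the
unique `w ∈ G` with `⟪w, p⟫ = (p.1)_∅` for all `p ∈ G`.  (The inner ℂ product of
`ℱ²_d ⊕ ℱ²_d` is `⟪p, q⟫ = ⟪p.1, q.1⟫ + ⟪p.2, q.2⟫`, conjugate-linear in the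
first argument.) -/
theorem statement9 {d : ℕ} (hd : 0 < d)
    (G : Submodule ℂ (Fock d × Fock d))
    (hclosed : IsClosed (G : Set (Fock d × Fock d)))
    (hgraph : ∀ y : Fock d, ((0 : Fock d), y) ∈ G → y = 0)
    (hdense : Dense {x : Fock d | ∃ p ∈ G, Prod.fst p = x})
    (hshift : ∀ p ∈ G, ∀ j : Fin d, ∀ q : Fock d × Fock d,
      (q.1 : Word d → ℂ) = rshift j (p.1 : Word d → ℂ) →
      (q.2 : Word d → ℂ) = rshift j (p.2 : Word d → ℂ) → q ∈ G)
    (hlocal : ∀ p ∈ G, (p.1 : Word d → ℂ) ([] : Word d) = 0 → ∀ j : Fin d,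
      ∀ x : Fock d, (x : Word d → ℂ) = rshiftAdj j (p.1 : Word d → ℂ) →
        ∃ y : Fock d, (x, y) ∈ G) :
    ∃ w : Fock d × Fock d, w ∈ G ∧ w ≠ 0 ∧
      (∀ p ∈ G, (inner ℂ w.1 p.1 + inner ℂ w.2 p.2 : ℂ) = (p.1 : Word d → ℂ) ([] : Word d)) ∧
      {p : Fock d × Fock d | p ∈ G ∧ ∀ q ∈ G, ∀ j : Fin d, ∀ q' : Fock d × Fock d,
          (q'.1 : Word d → ℂ) = rshift j ((q : Fock d × Fock d).1 : Word d → ℂ) →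
          (q'.2 : Word d → ℂ) = rshift j ((q : Fock d × Fock d).2 : Word d → ℂ) →
          (inner ℂ p.1 q'.1 + inner ℂ p.2 q'.2 : ℂ) = 0}
        = {p : Fock d × Fock d | ∃ c : ℂ, p = c • w} := by
  classical
  obtain ⟨w, hwG, hwinner⟩ := exists_w G hclosed
  -- w ≠ 0
  have hex : ∃ p ∈ G, (p.1 : Word d → ℂ) ([] : Word d) ≠ 0 := by
    by_contra h
    push_neg at h
    have heq : Set.EqOn (⇑(evalCLM ([] : Word d))) (⇑(0 : Fock d →L[ℂ] ℂ))
        {x : Fock d | ∃ p ∈ G, Prod.fst p = x} := by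
      rintro x ⟨p, hp, rfl⟩
      simpa using h p hp
    have hzero := Continuous.ext_on hdense (evalCLM ([] : Word d)).continuous
      (0 : Fock d →L[ℂ] ℂ).continuous heq
    have h1 : evalCLM ([] : Word d) (lp.single 2 ([] : Word d) (1 : ℂ)) = 1 := by
      simp [lp.single_apply]
    rw [congrFun hzero (lp.single 2 ([] : Word d) (1 : ℂ))] at h1
    simp at h1
  have hwne : w ≠ 0 := by
    obtain ⟨p, hp, hpne⟩ := hex
    intro hw0
    apply hpne
    rw [← hwinner p hp, hw0]
    simp
  have hwnil : (w.1 : Word d → ℂ) ([] : Word d) ≠ 0 := by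
    intro h0
    have hww := hwinner w hwG
    rw [h0] at hww
    obtain ⟨h1, h2⟩ := inner_self_pair_eq_zero hww
    exact hwne (Prod.ext h1 h2)
  -- orthogonality of w to shifted graph vectors
  have hworth : ∀ q ∈ G, ∀ j : Fin d, ∀ q' : Fock d × Fock d,
      (q'.1 : Word d → ℂ) = rshift j (q.1 : Word d → ℂ) →
      (q'.2 : Word d → ℂ) = rshift j (q.2 : Word d → ℂ) →
      (inner ℂ w.1 q'.1 + inner ℂ w.2 q'.2 : ℂ) = 0 := by
    intro q hq j q' h1 h2
    have hq' : q' ∈ G := hshift q hq j q' h1 h2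
    rw [hwinner q' hq', h1, rshift_nil]
  refine ⟨w, hwG, hwne, hwinner, ?_⟩
  ext p
  simp only [Set.mem_setOf_eq]
  constructor
  · rintro ⟨hpG, hporth⟩
    set c : ℂ := (p.1 : Word d → ℂ) ([] : Word d) / (w.1 : Word d → ℂ) ([] : Word d) with hc
    refine ⟨c, ?_⟩
    set p' : Fock d × Fock d := p - c • w with hp'def
    have hp'G : p' ∈ G := G.sub_mem hpG (G.smul_mem c hwG)
    have hp'nil : (p'.1 : Word d → ℂ) ([] : Word d) = 0 := by
      have hco : (p'.1 : Word d → ℂ) = (p.1 : Word d → ℂ) - c • (w.1 : Word d → ℂ) := by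
        rw [hp'def]
        simp only [Prod.fst_sub, Prod.smul_fst, lp.coeFn_sub, lp.coeFn_smul]
      rw [hco]
      simp only [Pi.sub_apply, Pi.smul_apply, smul_eq_mul, hc]
      field_simp
      ring
    have hp'orth : ∀ q ∈ G, ∀ j : Fin d, ∀ q' : Fock d × Fock d,
        (q'.1 : Word d → ℂ) = rshift j (q.1 : Word d → ℂ) →
        (q'.2 : Word d → ℂ) = rshift j (q.2 : Word d → ℂ) →
        (inner ℂ p'.1 q'.1 + inner ℂ p'.2 q'.2 : ℂ) = 0 := by
      intro q hq j q' h1 h2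
      have hA := hporth q hq j q' h1 h2
      have hB := hworth q hq j q' h1 h2
      rw [hp'def]
      simp only [Prod.fst_sub, Prod.snd_sub, Prod.smul_fst, Prod.smul_snd,
        inner_sub_left, inner_smul_left]
      rw [show (inner ℂ p.1 q'.1 - (starRingEnd ℂ) c * inner ℂ w.1 q'.1 +
          (inner ℂ p.2 q'.2 - (starRingEnd ℂ) c * inner ℂ w.2 q'.2) : ℂ)
          = (inner ℂ p.1 q'.1 + inner ℂ p.2 q'.2) -
            (starRingEnd ℂ) c * (inner ℂ w.1 q'.1 + inner ℂ w.2 q'.2) by ring, hA, hB]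
      ring
    -- p' is a sum of shifted graph vectors
    let x : Fin d → Fock d := fun j => ⟨rshiftAdj j (p'.1 : Word d → ℂ), memℓp_rshiftAdj j p'.1⟩
    have hxy : ∀ j : Fin d, ∃ y : Fock d, (x j, y) ∈ G := fun j =>
      hlocal p' hp'G hp'nil j (x j) rfl
    choose y hy using hxy
    let q' : Fin d → Fock d × Fock d := fun j =>
      (⟨rshift j ((x j : Fock d) : Word d → ℂ), memℓp_rshift j (x j)⟩,
       ⟨rshift j ((y j : Fock d) : Word d → ℂ), memℓp_rshift j (y j)⟩)
    have hq'G : ∀ j, q' j ∈ G := fun j => hshift (x j, y j) (hy j) j (q' j) rfl rfl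
    have hfst : (∑ j : Fin d, q' j).1 = p'.1 := by
      apply lp.ext
      rw [Prod.fst_sum, coeFn_finset_sum]
      funext α
      rw [Finset.sum_apply]
      exact sum_rshift_rshiftAdj (p'.1 : Word d → ℂ) hp'nil α
    have hsum : p' = ∑ j : Fin d, q' j := by
      have hzG : p' - ∑ j : Fin d, q' j ∈ G :=
        G.sub_mem hp'G (Submodule.sum_mem G fun j _ => hq'G j)
      have hz1 : (p' - ∑ j : Fin d, q' j).1 = 0 := by
        rw [Prod.fst_sub, hfst, sub_self]
      have hz : ((0 : Fock d), (p' - ∑ j : Fin d, q' j).2) ∈ G := by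
        rw [← hz1]
        exact hzG
      have hz2 := hgraph _ hz
      have hzz : p' - ∑ j : Fin d, q' j = 0 := Prod.ext hz1 hz2
      exact (sub_eq_zero.mp hzz)
    have hzero : (inner ℂ p'.1 p'.1 + inner ℂ p'.2 p'.2 : ℂ) = 0 := by
      calc (inner ℂ p'.1 p'.1 + inner ℂ p'.2 p'.2 : ℂ)
          = inner ℂ p'.1 (∑ j : Fin d, q' j).1 + inner ℂ p'.2 (∑ j : Fin d, q' j).2 := by
            rw [← hsum]
        _ = ∑ j : Fin d, (inner ℂ p'.1 ((q' j).1) : ℂ) + ∑ j : Fin d, (inner ℂ p'.2 ((q' j).2) : ℂ) := by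
            rw [Prod.fst_sum, Prod.snd_sum, inner_sum, inner_sum]
        _ = ∑ j : Fin d, ((inner ℂ p'.1 ((q' j).1) : ℂ) + (inner ℂ p'.2 ((q' j).2) : ℂ)) := by
            rw [← Finset.sum_add_distrib]
        _ = 0 := Finset.sum_eq_zero fun j _ => hp'orth (x j, y j) (hy j) j (q' j) rfl rfl
    obtain ⟨h1, h2⟩ := inner_self_pair_eq_zero hzero
    have hp'0 : p' = 0 := Prod.ext h1 h2
    rw [hp'def] at hp'0
    exact sub_eq_zero.mp hp'0
  · rintro ⟨c, rfl⟩
    refine ⟨G.smul_mem c hwG, ?_⟩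
    intro q hq j q' h1 h2
    have hB := hworth q hq j q' h1 h2
    simp only [Prod.smul_fst, Prod.smul_snd, inner_smul_left]
    rw [show ((starRingEnd ℂ) c * inner ℂ w.1 q'.1 + (starRingEnd ℂ) c * inner ℂ w.2 q'.2 : ℂ)
        = (starRingEnd ℂ) c * (inner ℂ w.1 q'.1 + inner ℂ w.2 q'.2) by ring, hB, mul_zero]


end Smirnov
end
end

section
/- Let H be a bounded left multiplier of ℱ²_d, and suppose C is a bounded left multiplier which is invertible, i.e. there is a bounded left multiplier C⁻¹ with C·C⁻¹ = C⁻¹·C = ξ_∅, and which satisfies ‖C·F‖² = ‖F‖² + ‖H·F‖² for all F ∈ ℱ²_d (equivalently M_C*M_C = I + M_H*M_H). Then A := C⁻¹ and B := H·A form the canonical pair for H: A is left outer, B = H·A, and the column (A,B) is an isometric multiplier, i.e. ‖A·F‖² + ‖B·F‖² = ‖F‖² for all F ∈ ℱ²_d. -/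
noncomputable section
open scoped ENNReal

namespace Smirnov

lemma cauchy_one {d : ℕ} (F : Word d → ℂ) : cauchy (eWord ([] : Word d)) F = F := by
  funext α
  unfold cauchy eWord
  rw [Finset.sum_eq_single 0]
  · simp
  · intro i hi hne
    simp only [Finset.mem_range] at hi
    have hα : α ≠ [] := by
      intro h; subst h; simp at hi; omega
    rw [if_neg, zero_mul]
    rw [List.take_eq_nil_iff]
    tauto
  · intro h; simp at h

lemma cauchy_assoc {d : ℕ} (A B F : Word d → ℂ) :
    cauchy (cauchy A B) F = cauchy A (cauchy B F) := by
  funext α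
  unfold cauchy
  set n := α.length with hn
  have hL : ∀ i ∈ Finset.range (n+1),
      (∑ j ∈ Finset.range ((α.take i).length + 1), A ((α.take i).take j) * B ((α.take i).drop j)) * F (α.drop i)
    = ∑ j ∈ Finset.range (i+1), A (α.take j) * (B ((α.take i).drop j) * F (α.drop i)) := by
    intro i hi
    simp only [Finset.mem_range] at hi
    have h1 : (α.take i).length = i := by
      rw [List.length_take]; omega
    rw [h1, Finset.sum_mul]
    refine Finset.sum_congr rfl ?_
    intro j hj
    simp only [Finset.mem_range] at hj
    rw [List.take_take, min_eq_left (by omega), mul_assoc]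
  rw [Finset.sum_congr rfl hL]
  rw [Finset.sum_comm' (t' := Finset.range (n+1)) (s' := fun j => Finset.Ico j (n+1))
    (by intro i j; simp only [Finset.mem_range, Finset.mem_Ico]; omega)]
  refine Finset.sum_congr rfl ?_
  intro j hj
  simp only [Finset.mem_range] at hj
  have hdl : (α.drop j).length = n - j := by rw [List.length_drop]
  rw [hdl, Finset.mul_sum, Finset.sum_Ico_eq_sum_range]
  have : n + 1 - j = n - j + 1 := by omega
  rw [this]
  refine Finset.sum_congr rfl ?_
  intro k hk
  simp only [Finset.mem_range] at hk
  have e1 : (α.take (j+k)).drop j = (α.drop j).take k := by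
    rw [List.drop_take]; congr 1; omega
  have e2 : α.drop (j+k) = (α.drop j).drop k := by
    rw [List.drop_drop]
  rw [e1, e2]

/-- Suppose `H` is a bounded left multiplier of `ℱ²_d` and `C`
is a bounded left multiplier which is invertible (with bounded left multiplier
inverse `C⁻¹`, `C·C⁻¹ = C⁻¹·C = ξ_∅`) satisfying `‖C·F‖² = ‖F‖² + ‖H·F‖²` for
all `F ∈ ℱ²_d`.  Then `A := C⁻¹` and `B := H·A` form the canonical pair for
`H`: `A` is left outer, `B` is a bounded left multiplier, and the column
`(A,B)` is an isometric multiplier. -/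
theorem statement17 {d : ℕ} (hd : 0 < d) (H C Cinv : Word d → ℂ)
    (hH : IsBLM H) (hC : IsBLM C) (hCinv : IsBLM Cinv)
    (hright : cauchy C Cinv = eWord ([] : Word d))
    (hleft : cauchy Cinv C = eWord ([] : Word d))
    (hnorm : ∀ (F GC GH : Fock d),
      (GC : Word d → ℂ) = cauchy C (F : Word d → ℂ) →
      (GH : Word d → ℂ) = cauchy H (F : Word d → ℂ) →
      ‖GC‖ ^ 2 = ‖F‖ ^ 2 + ‖GH‖ ^ 2) :
    IsLeftOuter Cinv ∧
    IsBLM (cauchy H Cinv) ∧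
    (∀ (F GA GB : Fock d),
      (GA : Word d → ℂ) = cauchy Cinv (F : Word d → ℂ) →
      (GB : Word d → ℂ) = cauchy (cauchy H Cinv) (F : Word d → ℂ) →
      ‖GA‖ ^ 2 + ‖GB‖ ^ 2 = ‖F‖ ^ 2) := by
  refine ⟨?_, ?_, ?_⟩
  · -- Cinv is left outer: its multiplier range is everything
    have huniv : {G : Fock d | ∃ F : Fock d,
        (G : Word d → ℂ) = cauchy Cinv (F : Word d → ℂ)} = Set.univ := by
      ext G
      simp only [Set.mem_setOf_eq, Set.mem_univ, iff_true]
      refine ⟨⟨cauchy C (G : Word d → ℂ), hC.1 G⟩, ?_⟩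
      show (G : Word d → ℂ) = cauchy Cinv (cauchy C (G : Word d → ℂ))
      rw [← cauchy_assoc, hleft, cauchy_one]
    rw [IsLeftOuter, huniv]
    exact dense_univ
  · -- B = H·Cinv is a bounded left multiplier
    constructor
    · intro F
      have h1 : Memℓp (cauchy Cinv (F : Word d → ℂ)) 2 := hCinv.1 F
      have h2 := hH.1 ⟨cauchy Cinv (F : Word d → ℂ), h1⟩
      rw [cauchy_assoc]
      exact h2
    · obtain ⟨cH, hcH⟩ := hH.2
      obtain ⟨cI, hcI⟩ := hCinv.2
      refine ⟨max cH 0 * max cI 0, ?_⟩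
      intro F G hG
      set GA : Fock d := ⟨cauchy Cinv (F : Word d → ℂ), hCinv.1 F⟩ with hGAdef
      have hGAc : (GA : Word d → ℂ) = cauchy Cinv (F : Word d → ℂ) := rfl
      have h1 : ‖GA‖ ≤ cI * ‖F‖ := hcI F GA hGAc
      have h2 : ‖G‖ ≤ cH * ‖GA‖ := hcH GA G (by rw [hG, cauchy_assoc, hGAc])
      have h3 : cH * ‖GA‖ ≤ max cH 0 * ‖GA‖ :=
        mul_le_mul_of_nonneg_right (le_max_left _ _) (norm_nonneg _)
      have h4 : ‖GA‖ ≤ max cI 0 * ‖F‖ :=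
        h1.trans (mul_le_mul_of_nonneg_right (le_max_left _ _) (norm_nonneg _))
      have h5 : max cH 0 * ‖GA‖ ≤ max cH 0 * (max cI 0 * ‖F‖) :=
        mul_le_mul_of_nonneg_left h4 (le_max_right _ _)
      rw [mul_assoc]
      linarith
  · -- the column (A,B) is isometric
    intro F GA GB hGA hGB
    have hF : (F : Word d → ℂ) = cauchy C ((GA : Fock d) : Word d → ℂ) := by
      rw [hGA, ← cauchy_assoc, hright, cauchy_one]
    have hB' : ((GB : Fock d) : Word d → ℂ) = cauchy H ((GA : Fock d) : Word d → ℂ) := by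
      rw [hGB, cauchy_assoc, hGA]
    have h := hnorm GA F GB hF hB'
    linarith


end Smirnov
end
end
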